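/- Let n, m : Ω → ℝ² be weakly differentiable with (n(x), m(x)) an orthonormal basis of ℝ² a.e., and let u = (u₁, u₂) : Ω → ℝ² be weakly differentiable. Define M := u₁n + u₂m. Then for each k ∈ {1,2}, almost everywhere: |∂ₖM|² = |∂ₖu|² + 2(u₁∂ₖu₂ − u₂∂ₖu₁)(m·∂ₖn) + |u|²|∂ₖn|². -/

import Mathlib

open scoped RealInnerProductSpace

private lemma decomp_two {E : Type*} [NormedAddCommGroup E] [InnerProductSpace ℝ E]
    [FiniteDimensional ℝ E] (h2 : Module.finrank ℝ E = 2)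
    (n m v : E) (hnn : ⟪n, n⟫ = (1:ℝ)) (hmm : ⟪m, m⟫ = (1:ℝ)) (hnm : ⟪n, m⟫ = (0:ℝ)) :
    v = ⟪n, v⟫ • n + ⟪m, v⟫ • m := by
  have hn1 : ‖n‖ = 1 := by
    have h := real_inner_self_eq_norm_sq n; rw [hnn] at h; nlinarith [norm_nonneg n]
  have hm1 : ‖m‖ = 1 := by
    have h := real_inner_self_eq_norm_sq m; rw [hmm] at h; nlinarith [norm_nonneg m]
  have hON : Orthonormal ℝ ![n, m] := by
    rw [orthonormal_iff_ite]
    intro i j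
    have hmn : ⟪m, n⟫ = (0:ℝ) := by rw [real_inner_comm]; exact hnm
    fin_cases i <;> fin_cases j <;> simp [hnn, hmm, hnm, hmn, hn1, hm1]
  have hspan : Submodule.span ℝ (Set.range ![n, m]) = ⊤ := by
    have := (basisOfOrthonormalOfCardEqFinrank hON
      (by simp [h2] : Fintype.card (Fin 2) = Module.finrank ℝ E)).span_eq
    rwa [coe_basisOfOrthonormalOfCardEqFinrank] at this
  have hrange : Set.range ![n, m] = {n, m} := by
    ext y; simp [Fin.exists_fin_two, or_comm]
  have hv : v ∈ Submodule.span ℝ ({n, m} : Set E) := by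
    rw [← hrange, hspan]; trivial
  obtain ⟨c, d, hcd⟩ := Submodule.mem_span_pair.mp hv
  have hc : ⟪n, v⟫ = c := by
    rw [← hcd]
    simp [inner_add_right, real_inner_smul_right, hnn, hnm, hn1]
  have hd : ⟪m, v⟫ = d := by
    have hmn : ⟪m, n⟫ = (0:ℝ) := by rw [real_inner_comm]; exact hnm
    rw [← hcd]
    simp [inner_add_right, real_inner_smul_right, hmm, hmn, hm1]
  rw [hc, hd, hcd]

/-- Change-of-variables identity for the gradient in the moving frame `(n, m)`:
with `M = u₁ n + u₂ m`,
`|∂ₖM|² = |∂ₖu|² + 2(u₁∂ₖu₂ − u₂∂ₖu₁)(m·∂ₖn) + |u|²|∂ₖn|²`. -/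
theorem stmt_13 (Ω : Set (EuclideanSpace ℝ (Fin 2))) (hΩ : IsOpen Ω)
    (n m : EuclideanSpace ℝ (Fin 2) → EuclideanSpace ℝ (Fin 2))
    (u₁ u₂ : EuclideanSpace ℝ (Fin 2) → ℝ)
    (hn : ∀ x ∈ Ω, DifferentiableAt ℝ n x)
    (hm : ∀ x ∈ Ω, DifferentiableAt ℝ m x)
    (hu₁ : ∀ x ∈ Ω, DifferentiableAt ℝ u₁ x)
    (hu₂ : ∀ x ∈ Ω, DifferentiableAt ℝ u₂ x)
    (hnn : ∀ x ∈ Ω, ⟪n x, n x⟫ = (1:ℝ))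
    (hmm : ∀ x ∈ Ω, ⟪m x, m x⟫ = (1:ℝ))
    (hnm : ∀ x ∈ Ω, ⟪n x, m x⟫ = (0:ℝ)) :
    ∀ x ∈ Ω, ∀ k : Fin 2,
      ‖fderiv ℝ (fun y => u₁ y • n y + u₂ y • m y) x
          (EuclideanSpace.single k 1)‖ ^ 2
        = (fderiv ℝ u₁ x (EuclideanSpace.single k 1)) ^ 2
          + (fderiv ℝ u₂ x (EuclideanSpace.single k 1)) ^ 2
          + 2 * (u₁ x * fderiv ℝ u₂ x (EuclideanSpace.single k 1)
                 - u₂ x * fderiv ℝ u₁ x (EuclideanSpace.single k 1))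
              * ⟪m x, fderiv ℝ n x (EuclideanSpace.single k 1)⟫
          + ((u₁ x) ^ 2 + (u₂ x) ^ 2)
              * ‖fderiv ℝ n x (EuclideanSpace.single k 1)‖ ^ 2 := by
  intro x hx k
  set e : EuclideanSpace ℝ (Fin 2) := EuclideanSpace.single k 1 with he
  have hnx := hn x hx
  have hmx := hm x hx
  have hu₁x := hu₁ x hx
  have hu₂x := hu₂ x hx
  have hmemn : Ω ∈ nhds x := hΩ.mem_nhds hx
  -- derivative of the constant constraints
  have key : ∀ f g : EuclideanSpace ℝ (Fin 2) → EuclideanSpace ℝ (Fin 2),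
      DifferentiableAt ℝ f x → DifferentiableAt ℝ g x →
      (∀ y ∈ Ω, ⟪f y, g y⟫ = (⟪f x, g x⟫ : ℝ)) →
      ⟪f x, fderiv ℝ g x e⟫ + ⟪fderiv ℝ f x e, g x⟫ = 0 := by
    intro f g hf hg hconst
    have hev : (fun y => (⟪f y, g y⟫ : ℝ)) =ᶠ[nhds x] fun _ => (⟪f x, g x⟫ : ℝ) := by
      filter_upwards [hmemn] with y hy using hconst y hy
    have h0 : fderiv ℝ (fun y => (⟪f y, g y⟫ : ℝ)) x e = 0 := by
      rw [hev.fderiv_eq]; simp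
    rwa [fderiv_inner_apply ℝ hf hg e] at h0
  have hna : ⟪n x, fderiv ℝ n x e⟫ = (0:ℝ) := by
    have h := key n n hnx hnx (fun y hy => by rw [hnn y hy, hnn x hx])
    have h2 := real_inner_comm (fderiv ℝ n x e) (n x)
    linarith
  have hmb : ⟪m x, fderiv ℝ m x e⟫ = (0:ℝ) := by
    have h := key m m hmx hmx (fun y hy => by rw [hmm y hy, hmm x hx])
    have h2 := real_inner_comm (fderiv ℝ m x e) (m x)
    linarith
  have hnb : ⟪n x, fderiv ℝ m x e⟫ = -⟪m x, fderiv ℝ n x e⟫ := by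
    have h := key n m hnx hmx (fun y hy => by rw [hnm y hy, hnm x hx])
    have h2 := real_inner_comm (fderiv ℝ n x e) (m x)
    linarith
  set c : ℝ := ⟪m x, fderiv ℝ n x e⟫ with hc
  have hmn : ⟪m x, n x⟫ = (0:ℝ) := by rw [real_inner_comm]; exact hnm x hx
  -- decompositions of the derivatives of the frame
  have ha : fderiv ℝ n x e = c • m x := by
    have := decomp_two finrank_euclideanSpace_fin (n x) (m x) (fderiv ℝ n x e)
      (hnn x hx) (hmm x hx) (hnm x hx)
    rwa [hna, zero_smul, zero_add] at this
  have hb : fderiv ℝ m x e = (-c) • n x := by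
    have := decomp_two finrank_euclideanSpace_fin (n x) (m x) (fderiv ℝ m x e)
      (hnn x hx) (hmm x hx) (hnm x hx)
    rwa [hmb, zero_smul, add_zero, hnb, neg_smul, ← neg_smul] at this
  -- derivative of M
  have hM : fderiv ℝ (fun y => u₁ y • n y + u₂ y • m y) x e
      = (fderiv ℝ u₁ x e) • n x + u₁ x • fderiv ℝ n x e
        + ((fderiv ℝ u₂ x e) • m x + u₂ x • fderiv ℝ m x e) := by
    rw [fderiv_fun_add (f := fun y => u₁ y • n y) (g := fun y => u₂ y • m y) (hu₁x.smul hnx) (hu₂x.smul hmx), fderiv_fun_smul hu₁x hnx,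
      fderiv_fun_smul hu₂x hmx]
    simp [ContinuousLinearMap.add_apply, ContinuousLinearMap.smulRight_apply]
    abel
  have hD : fderiv ℝ (fun y => u₁ y • n y + u₂ y • m y) x e
      = (fderiv ℝ u₁ x e - u₂ x * c) • n x + (fderiv ℝ u₂ x e + u₁ x * c) • m x := by
    rw [hM, ha, hb]
    module
  have hnorm : ∀ A B : ℝ, ‖A • n x + B • m x‖ ^ 2 = A ^ 2 + B ^ 2 := by
    intro A B
    rw [← real_inner_self_eq_norm_sq]
    simp only [inner_add_left, inner_add_right, real_inner_smul_left,
      real_inner_smul_right, hnn x hx, hmm x hx, hnm x hx, hmn]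
    ring
  have hanorm : ‖fderiv ℝ n x e‖ ^ 2 = c ^ 2 := by
    have : fderiv ℝ n x e = (0:ℝ) • n x + c • m x := by rw [ha]; module
    rw [this, hnorm]
    ring
  rw [hD, hnorm, hanorm]
  ring
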